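/- arXiv:0811.4309 — 2 statements merged into one kernel-verified Lean document; each statement's English description precedes it below -/
import Mathlib

section
/- Let A = A_q^a be a quantum complete intersection over a field k, let φ : A → k be the k-linear functional sending an element of A to the coefficient of the monomial x_c^{a_c−1}⋯x_1^{a_1−1} with respect to the k-basis {x_c^{i_c}⋯x_1^{i_1} : 0 ≤ i_w ≤ a_w − 1}, and let ν be the k-algebra automorphism of A with ν(x_w) = (∏_{i=1}^{c} q_{iw}^{a_i − 1}) x_w for 1 ≤ w ≤ c. Then φ(λx) = φ(ν(x)λ) for all λ, x ∈ A; that is, ν is a Nakayama automorphism of A with respect to φ. -/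
/-!
The automorphism `ν` with `ν(x_w) = (∏_i q_{iw}^{a_i-1}) x_w` is a Nakayama automorphism
of `A_q^a` with respect to the socle-coefficient functional `φ`, i.e. `φ(λx) = φ(ν(x)λ)`
(Lemma `nakayama`).
-/

noncomputable section

/-- The defining relations of the quantum complete intersection `A_q^a`:
`X_i ^ (a i) = 0` and `X_i * X_j = q i j • (X_j * X_i)`. -/
def qciRel (k : Type) [Field k] (c : ℕ) (q : Fin c → Fin c → k) (a : Fin c → ℕ) :
    FreeAlgebra k (Fin c) → FreeAlgebra k (Fin c) → Prop := fun x y =>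
  (∃ i, x = FreeAlgebra.ι k i ^ a i ∧ y = 0) ∨
  (∃ i j, x = FreeAlgebra.ι k i * FreeAlgebra.ι k j ∧
    y = q i j • (FreeAlgebra.ι k j * FreeAlgebra.ι k i))

/-- The quantum complete intersection `A_q^a = k⟨X_1,…,X_c⟩/(X_i^{a_i}, X_iX_j - q_{ij}X_jX_i)`. -/
abbrev QCI (k : Type) [Field k] (c : ℕ) (q : Fin c → Fin c → k) (a : Fin c → ℕ) : Type :=
  RingQuot (qciRel k c q a)

/-- The generator `x_i` of `A_q^a` (the image of `X_i`). -/
def qciX (k : Type) [Field k] {c : ℕ} (q : Fin c → Fin c → k) (a : Fin c → ℕ) (i : Fin c) :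
    QCI k c q a :=
  RingQuot.mkAlgHom k (qciRel k c q a) (FreeAlgebra.ι k i)

/-- The descending monomial `x_c^{d_c} ⋯ x_1^{d_1}` in `A_q^a`. -/
def qciDMono (k : Type) [Field k] {c : ℕ} (q : Fin c → Fin c → k) (a : Fin c → ℕ)
    (d : (i : Fin c) → Fin (a i)) : QCI k c q a :=
  (List.ofFn fun w : Fin c => qciX k q a w.rev ^ (d w.rev : ℕ)).prod

variable (k : Type) [Field k] {c : ℕ} (q : Fin c → Fin c → k) (a : Fin c → ℕ)

lemma qciX_pow_a (i : Fin c) : qciX k q a i ^ a i = 0 := by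
  have h := RingQuot.mkAlgHom_rel k (s := qciRel k c q a)
    (x := FreeAlgebra.ι k i ^ a i) (y := 0) (Or.inl ⟨i, rfl, rfl⟩)
  simpa [qciX, map_pow] using h

lemma qciX_comm (i j : Fin c) :
    qciX k q a i * qciX k q a j = q i j • (qciX k q a j * qciX k q a i) := by
  have h := RingQuot.mkAlgHom_rel k (s := qciRel k c q a)
    (x := FreeAlgebra.ι k i * FreeAlgebra.ι k j)
    (y := q i j • (FreeAlgebra.ι k j * FreeAlgebra.ι k i)) (Or.inr ⟨i, j, rfl, rfl⟩)
  simpa [qciX, map_mul, map_smul] using h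

lemma qciX_pow_comm (i j : Fin c) (m : ℕ) :
    qciX k q a i ^ m * qciX k q a j = q i j ^ m • (qciX k q a j * qciX k q a i ^ m) := by
  induction m with
  | zero => simp
  | succ n ih =>
    calc qciX k q a i ^ (n + 1) * qciX k q a j
        = qciX k q a i ^ n * (qciX k q a i * qciX k q a j) := by
          rw [pow_succ, mul_assoc]
      _ = qciX k q a i ^ n * (q i j • (qciX k q a j * qciX k q a i)) := by
          rw [qciX_comm]
      _ = q i j • (qciX k q a i ^ n * qciX k q a j * qciX k q a i) := by
          rw [mul_smul_comm, mul_assoc]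
      _ = q i j • ((q i j ^ n • (qciX k q a j * qciX k q a i ^ n)) * qciX k q a i) := by
          rw [ih]
      _ = q i j ^ (n + 1) • (qciX k q a j * qciX k q a i ^ (n + 1)) := by
          rw [smul_mul_assoc, smul_smul, mul_assoc, mul_comm (q i j), ← pow_succ, ← pow_succ]

lemma qciX_pow_comm' (hqc : ∀ i j, q i j * q j i = 1) (i j : Fin c) (m : ℕ) :
    qciX k q a j * qciX k q a i ^ m = q j i ^ m • (qciX k q a i ^ m * qciX k q a j) := by
  rw [qciX_pow_comm, smul_smul, ← mul_pow, hqc j i, one_pow, one_smul]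

lemma qci_list_move (l : List (Fin c)) (e : Fin c → ℕ) (w : Fin c) :
    (l.map fun v => qciX k q a v ^ e v).prod * qciX k q a w
      = ((l.map fun j => q j w ^ e j).prod) •
        (qciX k q a w * (l.map fun v => qciX k q a v ^ e v).prod) := by
  induction l with
  | nil => simp
  | cons v t ih =>
    simp only [List.map_cons, List.prod_cons]
    calc qciX k q a v ^ e v * (t.map fun v => qciX k q a v ^ e v).prod * qciX k q a w
        = qciX k q a v ^ e v * ((t.map fun v => qciX k q a v ^ e v).prod * qciX k q a w) := by
          rw [mul_assoc]
      _ = qciX k q a v ^ e v * (((t.map fun j => q j w ^ e j).prod) •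
            (qciX k q a w * (t.map fun v => qciX k q a v ^ e v).prod)) := by rw [ih]
      _ = ((t.map fun j => q j w ^ e j).prod) •
            (qciX k q a v ^ e v * qciX k q a w * (t.map fun v => qciX k q a v ^ e v).prod) := by
          rw [mul_smul_comm, mul_assoc]
      _ = ((t.map fun j => q j w ^ e j).prod) •
            ((q v w ^ e v • (qciX k q a w * qciX k q a v ^ e v)) *
              (t.map fun v => qciX k q a v ^ e v).prod) := by
          rw [qciX_pow_comm]
      _ = (q v w ^ e v * (t.map fun j => q j w ^ e j).prod) •
            (qciX k q a w * (qciX k q a v ^ e v * (t.map fun v => qciX k q a v ^ e v).prod)) := by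
          rw [smul_mul_assoc, smul_smul, mul_assoc, mul_comm ((t.map fun j => q j w ^ e j).prod)]

lemma qci_list_move' (hqc : ∀ i j, q i j * q j i = 1) (l : List (Fin c)) (e : Fin c → ℕ)
    (w : Fin c) :
    qciX k q a w * (l.map fun v => qciX k q a v ^ e v).prod
      = ((l.map fun j => q w j ^ e j).prod) •
        ((l.map fun v => qciX k q a v ^ e v).prod * qciX k q a w) := by
  rw [qci_list_move k q a l e w, smul_smul]
  have : (l.map fun j => q w j ^ e j).prod * (l.map fun j => q j w ^ e j).prod = 1 := by
    induction l with
    | nil => simp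
    | cons v t ih =>
      simp only [List.map_cons, List.prod_cons]
      rw [mul_mul_mul_comm, ih, mul_one, ← mul_pow, hqc w v, one_pow]
  rw [this, one_smul]

lemma qci_key_right (p s : List (Fin c)) (e : Fin c → ℕ) (w : Fin c)
    (hp : w ∉ p) (hs : w ∉ s) :
    ((p ++ w :: s).map fun v => qciX k q a v ^ e v).prod * qciX k q a w
      = ((s.map fun j => q j w ^ e j).prod) •
        ((p ++ w :: s).map fun v => qciX k q a v ^ Function.update e w (e w + 1) v).prod := by
  have hpc : (p.map fun v => qciX k q a v ^ Function.update e w (e w + 1) v)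
      = p.map fun v => qciX k q a v ^ e v :=
    List.map_congr_left fun x hx => by
      rw [Function.update_of_ne (by rintro rfl; exact hp hx)]
  have hsc : (s.map fun v => qciX k q a v ^ Function.update e w (e w + 1) v)
      = s.map fun v => qciX k q a v ^ e v :=
    List.map_congr_left fun x hx => by
      rw [Function.update_of_ne (by rintro rfl; exact hs hx)]
  simp only [List.map_append, List.map_cons, List.prod_append, List.prod_cons, hpc, hsc,
    Function.update_self]
  rw [mul_assoc, mul_assoc, qci_list_move k q a s e w, mul_smul_comm, mul_smul_comm]
  congr 1
  simp only [pow_succ, mul_assoc]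

lemma qci_key_left (hqc : ∀ i j, q i j * q j i = 1) (p s : List (Fin c)) (e : Fin c → ℕ)
    (w : Fin c) (hp : w ∉ p) (hs : w ∉ s) :
    qciX k q a w * ((p ++ w :: s).map fun v => qciX k q a v ^ e v).prod
      = ((p.map fun j => q w j ^ e j).prod) •
        ((p ++ w :: s).map fun v => qciX k q a v ^ Function.update e w (e w + 1) v).prod := by
  have hpc : (p.map fun v => qciX k q a v ^ Function.update e w (e w + 1) v)
      = p.map fun v => qciX k q a v ^ e v :=
    List.map_congr_left fun x hx => by
      rw [Function.update_of_ne (by rintro rfl; exact hp hx)]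
  have hsc : (s.map fun v => qciX k q a v ^ Function.update e w (e w + 1) v)
      = s.map fun v => qciX k q a v ^ e v :=
    List.map_congr_left fun x hx => by
      rw [Function.update_of_ne (by rintro rfl; exact hs hx)]
  simp only [List.map_append, List.map_cons, List.prod_append, List.prod_cons, hpc, hsc,
    Function.update_self]
  rw [← mul_assoc, qci_list_move' k q a hqc p e w, smul_mul_assoc]
  congr 1
  simp only [pow_succ', ← mul_assoc]

lemma qci_mid_zero (p s : List (Fin c)) (e : Fin c → ℕ) (w : Fin c) (hw : e w = a w) :
    ((p ++ w :: s).map fun v => qciX k q a v ^ e v).prod = 0 := by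
  simp [List.prod_append, hw, qciX_pow_a k q a w]

def qMo (e : Fin c → ℕ) : QCI k c q a :=
  (((List.finRange c).reverse).map fun v => qciX k q a v ^ e v).prod

lemma qciDMono_eq (d : (i : Fin c) → Fin (a i)) :
    qciDMono k q a d = qMo k q a (fun i => (d i : ℕ)) := by
  unfold qciDMono qMo
  rw [List.ofFn_eq_map, List.finRange_reverse, List.map_map]
  rfl

lemma qci_one_prod (hqc : ∀ i j, q i j * q j i = 1) (w : Fin c) (L : List (Fin c)) :
    (L.map fun j => q j w ^ (a j - 1)).prod * (L.map fun j => q w j ^ (a j - 1)).prod = 1 := by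
  induction L with
  | nil => simp
  | cons v t ih =>
    simp only [List.map_cons, List.prod_cons]
    rw [mul_mul_mul_comm, ih, mul_one, ← mul_pow, hqc v w, one_pow]

theorem qci_nakayama
    (k : Type) [Field k] (c : ℕ) (hc : 1 ≤ c)
    (q : Fin c → Fin c → k) (a : Fin c → ℕ)
    (hqd : ∀ i, q i i = 1) (hqc : ∀ i j, q i j * q j i = 1) (ha : ∀ i, 2 ≤ a i)
    -- the descending monomials form a k-basis of A
    (b : Module.Basis ((i : Fin c) → Fin (a i)) k (QCI k c q a))
    (hb : ∀ d, b d = qciDMono k q a d)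
    -- φ is the coefficient of the socle monomial x_c^{a_c-1} ⋯ x_1^{a_1-1}
    (φ : QCI k c q a →ₗ[k] k)
    (hφ : φ = b.coord fun i => ⟨a i - 1, by have := ha i; omega⟩)
    -- ν is the algebra automorphism with ν(x_w) = (∏_i q_{iw}^{a_i-1}) x_w
    (ν : QCI k c q a ≃ₐ[k] QCI k c q a)
    (hν : ∀ w : Fin c, ν (qciX k q a w) = (∏ i : Fin c, q i w ^ (a i - 1)) • qciX k q a w) :
    ∀ l x : QCI k c q a, φ (l * x) = φ (ν x * l) := by
  classical
  -- the socle index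
  set soc : (i : Fin c) → Fin (a i) := (fun i => ⟨a i - 1, by have := ha i; omega⟩) with hsoc
  -- Step 1: the identity on basis monomials against a generator
  have hgen_b : ∀ (w : Fin c) (d : (i : Fin c) → Fin (a i)),
      φ (qMo k q a (fun i => (d i : ℕ)) * qciX k q a w)
        = (∏ i, q i w ^ (a i - 1)) * φ (qciX k q a w * qMo k q a (fun i => (d i : ℕ))) := by
    intro w d
    set e : Fin c → ℕ := fun i => (d i : ℕ) with he
    obtain ⟨P, S, hPS⟩ := List.mem_iff_append.mp (List.mem_finRange w)
    have hnd : (P ++ w :: S).Nodup := hPS ▸ List.nodup_finRange c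
    rw [List.nodup_append] at hnd
    have hwP : w ∉ P := fun h => hnd.2.2 w h w List.mem_cons_self rfl
    have hwS : w ∉ S := (List.nodup_cons.mp hnd.2.1).1
    have hrev : (List.finRange c).reverse = S.reverse ++ w :: P.reverse := by
      rw [hPS]; simp
    have hMo : qMo k q a e
        = ((S.reverse ++ w :: P.reverse).map fun v => qciX k q a v ^ e v).prod := by
      rw [qMo, hrev]
    set e' : Fin c → ℕ := Function.update e w (e w + 1) with he'
    set M' : QCI k c q a :=
      ((S.reverse ++ w :: P.reverse).map fun v => qciX k q a v ^ e' v).prod with hM'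
    have h1 : qMo k q a e * qciX k q a w
        = ((P.reverse.map fun j => q j w ^ e j).prod) • M' := by
      rw [hMo]
      exact qci_key_right k q a _ _ e w (fun h => hwS (List.mem_reverse.mp h))
        (fun h => hwP (List.mem_reverse.mp h))
    have h2 : qciX k q a w * qMo k q a e
        = ((S.reverse.map fun j => q w j ^ e j).prod) • M' := by
      rw [hMo]
      exact qci_key_left k q a hqc _ _ e w (fun h => hwS (List.mem_reverse.mp h))
        (fun h => hwP (List.mem_reverse.mp h))
    rw [h1, h2, map_smul, map_smul, smul_eq_mul, smul_eq_mul]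
    by_cases hs : ∀ j, j ≠ w → (d j : ℕ) = a j - 1
    · -- the scalar identity
      have hPe : (P.reverse.map fun j => q j w ^ e j)
          = P.reverse.map fun j => q j w ^ (a j - 1) :=
        List.map_congr_left fun x hx =>
          congrArg (q x w ^ ·) (hs x (by rintro rfl; exact hwP (List.mem_reverse.mp hx)))
      have hSe : (S.reverse.map fun j => q w j ^ e j)
          = S.reverse.map fun j => q w j ^ (a j - 1) :=
        List.map_congr_left fun x hx =>
          congrArg (q w x ^ ·) (hs x (by rintro rfl; exact hwS (List.mem_reverse.mp hx)))
      have hQ : (∏ i, q i w ^ (a i - 1))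
          = (P.map fun j => q j w ^ (a j - 1)).prod * (S.map fun j => q j w ^ (a j - 1)).prod := by
        rw [Fin.prod_univ_def, hPS]
        simp [List.prod_append, hqd w]
      have hrewP : (P.reverse.map fun j => q j w ^ (a j - 1)).prod
          = (P.map fun j => q j w ^ (a j - 1)).prod := by
        rw [List.map_reverse, List.prod_reverse]
      have hrewS : (S.reverse.map fun j => q w j ^ (a j - 1)).prod
          = (S.map fun j => q w j ^ (a j - 1)).prod := by
        rw [List.map_reverse, List.prod_reverse]
      have hone := qci_one_prod k q a hqc w S
      rw [hPe, hSe, hrewP, hrewS, hQ]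
      ring_nf
      rw [mul_assoc, hone, mul_one]
    · -- φ M' = 0
      push_neg at hs
      obtain ⟨j0, hj0w, hj0⟩ := hs
      have hφM : φ M' = 0 := by
        by_cases hw : (d w : ℕ) = a w - 1
        · have hz : M' = 0 := by
            apply qci_mid_zero
            rw [he', Function.update_self]
            show (d w : ℕ) + 1 = a w
            have := ha w
            omega
          rw [hz, map_zero]
        · have hlt : ∀ j, e' j < a j := by
            intro j
            by_cases hj : j = w
            · subst hj
              rw [he', Function.update_self]
              show (d j : ℕ) + 1 < a j
              have h1 := (d j).isLt
              have h2 := ha j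
              omega
            · rw [he', Function.update_of_ne hj, he]
              exact (d j).isLt
          set d' : (i : Fin c) → Fin (a i) := fun i => ⟨e' i, hlt i⟩ with hd'
          have hMb : M' = b d' := by
            rw [hM', hb d', qciDMono_eq]
            rw [show qMo k q a (fun i => ((d' i : ℕ))) = qMo k q a e' from rfl]
            rw [qMo, hrev]
          have hne : d' ≠ soc := by
            intro hcon
            have := congrFun hcon j0
            rw [hd', hsoc] at this
            have hval : e' j0 = a j0 - 1 := congrArg Fin.val this
            rw [he', Function.update_of_ne hj0w, he] at hval
            exact hj0 hval
          rw [hMb, hφ, Module.Basis.coord_apply, Module.Basis.repr_self, Finsupp.single_apply, if_neg hne]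
      rw [hφM, mul_zero, mul_zero, mul_zero]
  -- Step 2: identity against a generator, for arbitrary left factor
  have hgen : ∀ (w : Fin c) (l : QCI k c q a),
      φ (l * qciX k q a w) = φ (ν (qciX k q a w) * l) := by
    intro w
    have hmaps : φ ∘ₗ LinearMap.mulRight k (qciX k q a w)
        = (∏ i, q i w ^ (a i - 1)) • (φ ∘ₗ LinearMap.mulLeft k (qciX k q a w)) := by
      apply Module.Basis.ext b
      intro d
      simp only [LinearMap.comp_apply, LinearMap.mulRight_apply, LinearMap.mulLeft_apply,
        LinearMap.smul_apply, smul_eq_mul, hb d, qciDMono_eq]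
      exact hgen_b w d
    intro l
    have h := LinearMap.congr_fun hmaps l
    simp only [LinearMap.comp_apply, LinearMap.mulRight_apply, LinearMap.mulLeft_apply,
      LinearMap.smul_apply, smul_eq_mul] at h
    rw [h, hν w, smul_mul_assoc, map_smul, smul_eq_mul]
  -- Step 3: the generators generate
  have hadj : ∀ x : QCI k c q a, x ∈ Algebra.adjoin k (Set.range (qciX k q a)) := by
    intro x
    have h1 : Set.range (qciX k q a)
        = ⇑(RingQuot.mkAlgHom k (qciRel k c q a)) '' Set.range (FreeAlgebra.ι k) := by
      rw [← Set.range_comp]; rfl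
    rw [h1, ← AlgHom.map_adjoin, FreeAlgebra.adjoin_range_ι, Algebra.map_top,
      (AlgHom.range_eq_top _).mpr (RingQuot.mkAlgHom_surjective k _)]
    exact Algebra.mem_top
  -- Step 4: induction
  intro l x
  have main : ∀ l, φ (l * x) = φ (ν x * l) := by
    refine Algebra.adjoin_induction (p := fun x _ => ∀ l, φ (l * x) = φ (ν x * l))
      ?_ ?_ ?_ ?_ (hadj x)
    · rintro y ⟨w, rfl⟩ l
      exact hgen w l
    · intro r l
      rw [AlgEquiv.commutes, Algebra.commutes]
    · intro u v _ _ hu hv l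
      simp only [mul_add, add_mul, map_add, hu l, hv l]
    · intro u v _ _ hu hv l
      calc φ (l * (u * v)) = φ (l * u * v) := by rw [mul_assoc]
        _ = φ (ν v * (l * u)) := hv (l * u)
        _ = φ (ν v * l * u) := by rw [mul_assoc]
        _ = φ (ν u * (ν v * l)) := hu (ν v * l)
        _ = φ (ν (u * v) * l) := by rw [map_mul ν, mul_assoc]
  exact main l
end
end

section
/- Let k be a field, let c ≥ 2 and a ≥ 2 be integers, and let q ∈ k satisfy q^{a−1} = 1. Then the algebra A = k⟨X_1, …, X_c⟩/(X_i^a for all i; X_iX_j − qX_jX_i for all i < j) is a symmetric k-algebra. -/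
/-!
For `c, a ≥ 2` and `q ∈ k` with `q^{a-1} = 1`, the algebra
`k⟨X_1,…,X_c⟩/(X_i^a, X_iX_j - qX_jX_i (i < j))` is a symmetric algebra
(Example (ii) after Theorem `symmetrysymmetric`).
-/

noncomputable section

/-- `A` is a symmetric `k`-algebra: there is a trace form `φ` with `φ(ab) = φ(ba)` whose
associated bilinear form `(a,b) ↦ φ(ab)` is nondegenerate. -/
def IsSymmAlg (k A : Type) [Field k] [Ring A] [Algebra k A] : Prop :=
  ∃ φ : A →ₗ[k] k, (∀ x y : A, φ (x * y) = φ (y * x)) ∧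
    (∀ x : A, (∀ y : A, φ (x * y) = 0) → x = 0) ∧
    (∀ y : A, (∀ x : A, φ (x * y) = 0) → y = 0)

/-- The commutation matrix with `q` above the diagonal, `1` on it and `q⁻¹` below it. -/
def unifQ (k : Type) [Field k] (c : ℕ) (q : k) : Fin c → Fin c → k :=
  fun i j => if i < j then q else if i = j then 1 else q⁻¹

namespace QciSym

variable {k : Type} [Field k] {c a : ℕ} (q : k)

/-- sum of coordinates below `i` -/
def sB (i : Fin c) (γ : Fin c → ℕ) : ℕ := ∑ j ∈ Finset.univ.filter (fun j => j < i), γ j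

def delta (k : Type) [Field k] {c : ℕ} (β : Fin c → ℕ) : (Fin c → ℕ) → k :=
  fun γ => if γ = β then 1 else 0

def addM (β : Fin c → ℕ) (i : Fin c) (m : ℕ) : Fin c → ℕ :=
  fun j => if j = i then β j + m else β j

lemma sB_addM (i : Fin c) (β : Fin c → ℕ) (m : ℕ) : sB i (addM β i m) = sB i β := by
  unfold sB
  refine Finset.sum_congr rfl fun j hj => ?_
  simp only [Finset.mem_filter] at hj
  simp [addM, (ne_of_lt hj.2)]

lemma sB_update (i : Fin c) (γ : Fin c → ℕ) (v : ℕ) :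
    sB i (Function.update γ i v) = sB i γ := by
  unfold sB
  refine Finset.sum_congr rfl fun j hj => ?_
  simp only [Finset.mem_filter] at hj
  rw [Function.update_of_ne (ne_of_lt hj.2)]

def Lmap (k : Type) [Field k] (c a : ℕ) (q : k) (i : Fin c) :
    ((Fin c → ℕ) → k) →ₗ[k] ((Fin c → ℕ) → k) where
  toFun f := fun γ =>
    if 1 ≤ γ i ∧ γ i < a then (q⁻¹) ^ (sB i γ) * f (Function.update γ i (γ i - 1)) else 0
  map_add' f g := by funext γ; by_cases h : 1 ≤ γ i ∧ γ i < a <;> simp [h, mul_add]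
  map_smul' r f := by
    funext γ; by_cases h : 1 ≤ γ i ∧ γ i < a <;> simp [h] <;> ring

lemma Lmap_apply (i : Fin c) (f : (Fin c → ℕ) → k) (γ : Fin c → ℕ) :
    Lmap k c a q i f γ =
      if 1 ≤ γ i ∧ γ i < a then (q⁻¹) ^ (sB i γ) * f (Function.update γ i (γ i - 1)) else 0 :=
  rfl

lemma Lpow_apply (i : Fin c) (m : ℕ) (hm : 1 ≤ m) (f : (Fin c → ℕ) → k) (γ : Fin c → ℕ) :
    (Lmap k c a q i ^ m) f γ =
      if m ≤ γ i ∧ γ i < a then ((q⁻¹) ^ (sB i γ)) ^ m * f (Function.update γ i (γ i - m))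
      else 0 := by
  induction m generalizing γ with
  | zero => omega
  | succ m ih =>
    rcases Nat.eq_or_lt_of_le hm with hm1 | hm2
    · -- m = 0
      have : m = 0 := by omega
      subst this
      simp [pow_one, Lmap_apply]
    · have hm' : 1 ≤ m := by omega
      rw [pow_succ' (Lmap k c a q i) m]
      rw [Module.End.mul_apply, Lmap_apply]
      by_cases h1 : 1 ≤ γ i ∧ γ i < a
      · rw [if_pos h1, ih hm']
        have hupd : (Function.update γ i (γ i - 1)) i = γ i - 1 := by simp
        rw [hupd, sB_update]
        by_cases h2 : m ≤ γ i - 1 ∧ γ i - 1 < a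
        · have hcond : m + 1 ≤ γ i ∧ γ i < a := by omega
          rw [if_pos h2, if_pos hcond]
          rw [Function.update_idem]
          have : γ i - 1 - m = γ i - (m + 1) := by omega
          rw [this, pow_succ]
          ring
        · have hcond : ¬ (m + 1 ≤ γ i ∧ γ i < a) := by omega
          rw [if_neg h2, if_neg hcond, mul_zero]
      · have hcond : ¬ (m + 1 ≤ γ i ∧ γ i < a) := by omega
        rw [if_neg h1, if_neg hcond]

lemma Lpow_a (ha : 1 ≤ a) (i : Fin c) : (Lmap k c a q i) ^ a = 0 := by
  ext f γ
  rw [Lpow_apply q i a ha]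
  simp only [LinearMap.zero_apply]
  rw [if_neg (by omega)]
  rfl

end QciSym
-- continuing: commutation relation
namespace QciSym
variable {k : Type} [Field k] {c a : ℕ} (q : k)

lemma sB_update_lt {i j : Fin c} (hij : i < j) (γ : Fin c → ℕ) (hγ : 1 ≤ γ i) :
    sB j (Function.update γ i (γ i - 1)) + 1 = sB j γ := by
  unfold sB
  have hmem : i ∈ Finset.univ.filter (fun m => m < j) := by simp [hij]
  rw [← Finset.add_sum_erase _ _ hmem, ← Finset.add_sum_erase _ γ hmem]
  have : ∑ x ∈ (Finset.univ.filter (fun m => m < j)).erase i,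
      Function.update γ i (γ i - 1) x = ∑ x ∈ (Finset.univ.filter (fun m => m < j)).erase i, γ x := by
    refine Finset.sum_congr rfl fun x hx => ?_
    rw [Function.update_of_ne (Finset.ne_of_mem_erase hx)]
  rw [this, Function.update_self]
  omega

lemma sB_update_not_lt {i j : Fin c} (hij : ¬ i < j) (γ : Fin c → ℕ) (v : ℕ) :
    sB j (Function.update γ i v) = sB j γ := by
  unfold sB
  refine Finset.sum_congr rfl fun x hx => ?_
  simp only [Finset.mem_filter] at hx
  have : x ≠ i := fun h => hij (h ▸ hx.2)
  rw [Function.update_of_ne this]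

lemma L_comm (hq : q ≠ 0) (i j : Fin c) :
    Lmap k c a q i * Lmap k c a q j =
      (if i < j then q else if i = j then 1 else q⁻¹) • (Lmap k c a q j * Lmap k c a q i) := by
  rcases eq_or_ne i j with rfl | hne
  · simp [lt_irrefl]
  · ext f γ
    simp only [Module.End.mul_apply, LinearMap.smul_apply, Pi.smul_apply, smul_eq_mul]
    rw [Lmap_apply, Lmap_apply]
    by_cases hi : 1 ≤ γ i ∧ γ i < a
    · rw [if_pos hi]
      by_cases hj : 1 ≤ γ j ∧ γ j < a
      · have hji : (Function.update γ i (γ i - 1)) j = γ j := Function.update_of_ne (Ne.symm hne) _ _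
        have hij' : (Function.update γ j (γ j - 1)) i = γ i := Function.update_of_ne hne _ _
        rw [Lmap_apply, Lmap_apply]
        rw [hji, hij', if_pos hj, if_pos hj, if_pos hi]
        have hcomm : Function.update (Function.update γ i (γ i - 1)) j (γ j - 1) =
            Function.update (Function.update γ j (γ j - 1)) i (γ i - 1) := by
          rw [← hji, ← hij']
          exact Function.update_comm hne _ _ γ
        rw [hcomm]
        rcases lt_or_gt_of_ne hne with hlt | hgt
        · rw [if_pos hlt]
          have h1 : sB j (Function.update γ i (γ i - 1)) + 1 = sB j γ := sB_update_lt hlt γ hi.1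
          have h2 : sB i (Function.update γ j (γ j - 1)) = sB i γ :=
            sB_update_not_lt (by omega) γ _
          rw [h2, ← h1, pow_succ]
          field_simp
        · rw [if_neg (by omega), if_neg (by exact hne)]
          have h1 : sB i (Function.update γ j (γ j - 1)) + 1 = sB i γ := sB_update_lt hgt γ hj.1
          have h2 : sB j (Function.update γ i (γ i - 1)) = sB j γ :=
            sB_update_not_lt (by omega) γ _
          rw [h2, ← h1, pow_succ]
          ring
      · rw [Lmap_apply, Lmap_apply]
        have hji : (Function.update γ i (γ i - 1)) j = γ j := Function.update_of_ne (Ne.symm hne) _ _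
        rw [hji, if_neg hj, if_neg hj]
        simp
    · rw [if_neg hi, Lmap_apply]
      by_cases hj : 1 ≤ γ j ∧ γ j < a
      · rw [if_pos hj, Lmap_apply]
        have hij' : (Function.update γ j (γ j - 1)) i = γ i := Function.update_of_ne hne _ _
        rw [hij', if_neg hi]
        simp
      · rw [if_neg hj]
        simp

end QciSym
namespace QciSym
variable {k : Type} [Field k] {c a : ℕ} (q : k)

lemma Lpow_delta (i : Fin c) (m : ℕ) (β : Fin c → ℕ) (hβi : β i < a) :
    (Lmap k c a q i ^ m) (delta k β) =
      if β i + m < a then ((q⁻¹) ^ (m * sB i β)) • delta k (addM β i m) else 0 := by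
  rcases Nat.eq_zero_or_pos m with rfl | hm
  · simp only [pow_zero, Module.End.one_apply, Nat.zero_mul, pow_zero, one_smul]
    rw [if_pos (by omega)]
    have : addM β i 0 = β := by funext j; simp [addM]
    rw [this]
  · funext γ
    rw [Lpow_apply q i m hm]
    by_cases hγ : γ = addM β i m
    · subst hγ
      have hγi : (addM β i m) i = β i + m := by simp [addM]
      by_cases hcond : β i + m < a
      · rw [if_pos (by omega)]
        rw [if_pos hcond]
        simp only [Pi.smul_apply, smul_eq_mul]
        have harg : Function.update (addM β i m) i (addM β i m i - m) = β := by
          funext j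
          rcases eq_or_ne j i with rfl | hji
          · simp [addM]
          · simp [Function.update_of_ne hji, addM, hji]
        rw [harg, sB_addM]
        have : delta k β β = 1 := by simp [delta]
        have hd : delta k (addM β i m) (addM β i m) = 1 := by simp [delta]
        rw [this, hd, mul_one, mul_one, pow_mul, ← pow_mul]
        ring
      · rw [if_neg (by omega)]
        rw [if_neg hcond]
        rfl
    · -- γ ≠ addM β i m: both sides 0
      have hL : (if m ≤ γ i ∧ γ i < a then
          ((q⁻¹) ^ (sB i γ)) ^ m * delta k β (Function.update γ i (γ i - m)) else 0) = 0 := by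
        by_cases hc : m ≤ γ i ∧ γ i < a
        · rw [if_pos hc]
          have : delta k β (Function.update γ i (γ i - m)) = 0 := by
            unfold delta
            rw [if_neg]
            intro h
            apply hγ
            funext j
            rcases eq_or_ne j i with rfl | hji
            · have := congrFun h j
              simp only [Function.update_self] at this
              simp [addM, ← this]
              omega
            · have := congrFun h j
              rw [Function.update_of_ne hji] at this
              simp [addM, hji, this]
          rw [this, mul_zero]
        · rw [if_neg hc]
      rw [hL]
      by_cases hcond : β i + m < a
      · rw [if_pos hcond]
        simp [delta, hγ]
      · rw [if_neg hcond]
        rfl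

lemma L_prod_delta (ha : 1 ≤ a) :
    ∀ (l : List (Fin c)) (α β : Fin c → ℕ), l.Pairwise (· < ·) →
      (∀ i, i ∉ l → α i = 0) → (∀ i, β i < a) →
      ((l.map (fun j => Lmap k c a q j ^ α j)).prod) (delta k β) =
        if ∀ i, α i + β i < a then
          ((q⁻¹) ^ (∑ i, α i * sB i β)) • delta k (fun i => α i + β i) else 0 := by
  intro l
  induction l with
  | nil =>
    intro α β _ hsupp hβ
    have hα : ∀ i, α i = 0 := fun i => hsupp i (List.not_mem_nil)
    simp only [List.map_nil, List.prod_nil, Module.End.one_apply]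
    rw [if_pos (fun i => by rw [hα i]; simpa using hβ i)]
    have h1 : ∑ i, α i * sB i β = 0 := Finset.sum_eq_zero fun i _ => by rw [hα i]; ring
    rw [h1, pow_zero, one_smul]
    have h2 : (fun i => α i + β i) = β := by funext j; rw [hα j, Nat.zero_add]
    rw [h2]
  | cons i t ih =>
    intro α β hpw hsupp hβ
    have hit : ∀ j ∈ t, i < j := fun j hj => (List.pairwise_cons.mp hpw).1 j hj
    have hpt : t.Pairwise (· < ·) := (List.pairwise_cons.mp hpw).2
    set α' : Fin c → ℕ := Function.update α i 0 with hα'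
    have hsupp' : ∀ j, j ∉ t → α' j = 0 := by
      intro j hj
      rcases eq_or_ne j i with rfl | hji
      · simp [hα']
      · have : j ∉ i :: t := by simp [hji, hj]
        rw [hα', Function.update_of_ne hji]
        exact hsupp j this
    have hmapeq : t.map (fun j => Lmap k c a q j ^ α j) = t.map (fun j => Lmap k c a q j ^ α' j) := by
      refine List.map_congr_left fun j hj => ?_
      have : j ≠ i := fun h => by exact absurd (h ▸ hit j hj) (lt_irrefl i)
      rw [hα', Function.update_of_ne this]
    rw [List.map_cons, List.prod_cons, Module.End.mul_apply, hmapeq,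
      ih α' β hpt hsupp' hβ]
    by_cases hg : ∀ j, α' j + β j < a
    · rw [if_pos hg, map_smul, Lpow_delta q i (α i) _ (by have := hg i; simpa [hα'] using this)]
      have h0 : α' i = 0 := by simp [hα']
      rw [h0, Nat.zero_add]
      by_cases hgi : β i + α i < a
      · rw [if_pos hgi, if_pos ?hall]
        case hall =>
          intro j
          rcases eq_or_ne j i with rfl | hji
          · omega
          · have := hg j
            rw [hα', Function.update_of_ne hji] at this
            exact this
        rw [smul_smul, ← pow_add]
        have hsb : (sB i fun j => α' j + β j) = sB i β := by
          unfold sB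
          refine Finset.sum_congr rfl fun j hj => ?_
          simp only [Finset.mem_filter] at hj
          have hji : j ≠ i := ne_of_lt hj.2
          have hjt : j ∉ t := fun hmem => absurd (hit j hmem) (by have := hj.2; omega)
          show α' j + β j = β j
          rw [hsupp' j hjt, Nat.zero_add]
        have hexp : (∑ j, α' j * sB j β) + α i * (sB i fun j => α' j + β j) =
            ∑ j, α j * sB j β := by
          rw [hsb]
          have hsplit : ∑ j, α j * sB j β =
              α i * sB i β + ∑ j ∈ Finset.univ.erase i, α j * sB j β :=
            (Finset.add_sum_erase _ _ (Finset.mem_univ i)).symm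
          have hsplit' : ∑ j, α' j * sB j β = ∑ j ∈ Finset.univ.erase i, α j * sB j β := by
            rw [← Finset.add_sum_erase _ (fun j => α' j * sB j β) (Finset.mem_univ i), h0,
              Nat.zero_mul, Nat.zero_add]
            refine Finset.sum_congr rfl fun j hj => ?_
            have hji := Finset.ne_of_mem_erase hj
            show α' j * sB j β = α j * sB j β
            rw [hα', Function.update_of_ne hji]
          omega
        have hvec : addM (fun j => α' j + β j) i (α i) = fun j => α j + β j := by
          funext j
          rcases eq_or_ne j i with rfl | hji
          · simp [addM, hα']
            omega
          · simp only [addM, if_neg hji, hα', Function.update_of_ne hji]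
        rw [hexp, hvec]
      · rw [if_neg hgi, if_neg ?hnall, smul_zero]
        case hnall =>
          intro hall
          exact hgi (by have := hall i; omega)
    · rw [if_neg hg, map_zero, if_neg ?hn2]
      case hn2 =>
        intro hall
        apply hg
        intro j
        rcases eq_or_ne j i with rfl | hji
        · have := hβ j
          simp [hα']
          omega
        · rw [hα', Function.update_of_ne hji]
          exact hall j

end QciSym
namespace QciSym
variable (k : Type) [Field k] (c a : ℕ) (q : k)

def xg (i : Fin c) : QCI k c (unifQ k c q) (fun _ => a) :=
  RingQuot.mkAlgHom k _ (FreeAlgebra.ι k i)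

lemma xg_pow (i : Fin c) : xg k c a q i ^ a = 0 := by
  have h := RingQuot.mkAlgHom_rel k
    (s := qciRel k c (unifQ k c q) (fun _ => a))
    (x := FreeAlgebra.ι k i ^ a) (y := 0) (Or.inl ⟨i, rfl, rfl⟩)
  rw [map_pow, map_zero] at h
  exact h

lemma xg_comm (i j : Fin c) :
    xg k c a q i * xg k c a q j = unifQ k c q i j • (xg k c a q j * xg k c a q i) := by
  have h := RingQuot.mkAlgHom_rel k
    (s := qciRel k c (unifQ k c q) (fun _ => a))
    (x := FreeAlgebra.ι k i * FreeAlgebra.ι k j)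
    (y := unifQ k c q i j • (FreeAlgebra.ι k j * FreeAlgebra.ι k i))
    (Or.inr ⟨i, j, rfl, rfl⟩)
  rw [map_mul, map_smul, map_mul] at h
  exact h

def rho (hq : q ≠ 0) (ha : 1 ≤ a) :
    QCI k c (unifQ k c q) (fun _ => a) →ₐ[k] Module.End k ((Fin c → ℕ) → k) :=
  RingQuot.liftAlgHom k ⟨FreeAlgebra.lift k (fun i => Lmap k c a q i), by
    intro x y h
    rcases h with ⟨i, rfl, rfl⟩ | ⟨i, j, rfl, rfl⟩
    · rw [map_pow, map_zero, FreeAlgebra.lift_ι_apply, Lpow_a q ha]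
    · rw [map_mul, map_smul, map_mul, FreeAlgebra.lift_ι_apply, FreeAlgebra.lift_ι_apply]
      have := L_comm (a := a) q hq i j
      unfold unifQ
      exact this⟩

lemma rho_xg (hq : q ≠ 0) (ha : 1 ≤ a) (i : Fin c) :
    rho k c a q hq ha (xg k c a q i) = Lmap k c a q i := by
  unfold rho xg
  rw [RingQuot.liftAlgHom_mkAlgHom_apply, FreeAlgebra.lift_ι_apply]

def MM (α : Fin c → ℕ) : QCI k c (unifQ k c q) (fun _ => a) :=
  ((List.finRange c).map (fun j => xg k c a q j ^ α j)).prod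

lemma rho_MM (hq : q ≠ 0) (ha : 1 ≤ a) (α : Fin c → ℕ) :
    rho k c a q hq ha (MM k c a q α) =
      ((List.finRange c).map (fun j => Lmap k c a q j ^ α j)).prod := by
  unfold MM
  rw [map_list_prod, List.map_map]
  congr 1
  refine List.map_congr_left fun j _ => ?_
  simp only [Function.comp_apply, map_pow, rho_xg]

lemma rho_MM_delta (hq : q ≠ 0) (ha : 1 ≤ a) (α β : Fin c → ℕ) (hβ : ∀ i, β i < a) :
    rho k c a q hq ha (MM k c a q α) (delta k β) =
      if ∀ i, α i + β i < a then
        ((q⁻¹) ^ (∑ i, α i * sB i β)) • delta k (fun i => α i + β i) else 0 := by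
  rw [rho_MM]
  exact L_prod_delta q ha (List.finRange c) α β (List.pairwise_lt_finRange c)
    (fun i hi => absurd (List.mem_finRange i) hi) hβ

def phi (hq : q ≠ 0) (ha : 1 ≤ a) : QCI k c (unifQ k c q) (fun _ => a) →ₗ[k] k where
  toFun z := rho k c a q hq ha z (delta k 0) (fun _ => a - 1)
  map_add' z w := by simp only [map_add, LinearMap.add_apply, Pi.add_apply]
  map_smul' r z := by
    simp only [map_smul, LinearMap.smul_apply, Pi.smul_apply, RingHom.id_apply, smul_eq_mul]

lemma phi_MM_mul (hq : q ≠ 0) (ha : 1 ≤ a) (α β : Fin c → ℕ)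
    (hα : ∀ i, α i < a) (hβ : ∀ i, β i < a) :
    phi k c a q hq ha (MM k c a q α * MM k c a q β) =
      if (fun i => α i + β i) = (fun _ => a - 1) then (q⁻¹) ^ (∑ i, α i * sB i β) else 0 := by
  have h0 : ∀ i, (0 : Fin c → ℕ) i < a := fun i => by simp; omega
  have hstep1 : rho k c a q hq ha (MM k c a q β) (delta k 0) = delta k β := by
    rw [rho_MM_delta k c a q hq ha β 0 h0]
    rw [if_pos (fun i => by simpa using hβ i)]
    have he : ∑ i, β i * sB i (0 : Fin c → ℕ) = 0 :=
      Finset.sum_eq_zero fun i _ => by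
        have : sB i (0 : Fin c → ℕ) = 0 := Finset.sum_eq_zero fun j _ => rfl
        rw [this]; ring
    rw [he, pow_zero, one_smul]
    congr 1
  show rho k c a q hq ha (MM k c a q α * MM k c a q β) (delta k 0) (fun _ => a - 1) = _
  rw [map_mul, Module.End.mul_apply, hstep1, rho_MM_delta k c a q hq ha α β hβ]
  by_cases hg : ∀ i, α i + β i < a
  · rw [if_pos hg]
    simp only [Pi.smul_apply, smul_eq_mul]
    unfold delta
    by_cases he : (fun i => α i + β i) = (fun _ : Fin c => a - 1)
    · rw [if_pos he, if_pos he.symm, mul_one]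
    · rw [if_neg he, if_neg (fun h => he h.symm), mul_zero]
  · rw [if_neg hg]
    have : ¬ ((fun i => α i + β i) = (fun _ : Fin c => a - 1)) := by
      intro h
      apply hg
      intro i
      have := congrFun h i
      try simp only at this
      omega
    rw [if_neg this]
    rfl

end QciSym
namespace QciSym
variable (k : Type) [Field k] (c a : ℕ) (q : k)

lemma comm_pow (i j : Fin c) (n : ℕ) :
    ∃ s : k, xg k c a q i * xg k c a q j ^ n = s • (xg k c a q j ^ n * xg k c a q i) := by
  induction n with
  | zero => exact ⟨1, by simp⟩
  | succ n ih =>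
    obtain ⟨s, hs⟩ := ih
    refine ⟨unifQ k c q i j * s, ?_⟩
    rw [pow_succ' (xg k c a q j) n, ← mul_assoc, xg_comm, smul_mul_assoc, mul_assoc, hs,
      mul_smul_comm, ← mul_assoc, ← pow_succ' (xg k c a q j) n, smul_smul]

lemma keyW : ∀ (l : List (Fin c)), l.Nodup → ∀ i ∈ l, ∀ α : Fin c → ℕ,
    ∃ s : k, xg k c a q i * (l.map (fun j => xg k c a q j ^ α j)).prod =
      s • (l.map (fun j => xg k c a q j ^ (Function.update α i (α i + 1)) j)).prod := by
  intro l
  induction l with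
  | nil => intro _ i hi; exact absurd hi (List.not_mem_nil)
  | cons j t ih =>
    intro hnd i hi α
    have hndt : t.Nodup := (List.nodup_cons.mp hnd).2
    have hjt : j ∉ t := (List.nodup_cons.mp hnd).1
    rw [List.map_cons, List.prod_cons, List.map_cons, List.prod_cons]
    rcases eq_or_ne i j with rfl | hij
    · refine ⟨1, ?_⟩
      have h2 : (t.map fun m => xg k c a q m ^ (Function.update α i (α i + 1)) m) =
          t.map fun m => xg k c a q m ^ α m := by
        refine List.map_congr_left fun m hm => ?_
        have : m ≠ i := fun h => hjt (h ▸ hm)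
        rw [Function.update_of_ne this]
      rw [h2, Function.update_self, one_smul, ← mul_assoc, ← pow_succ']
    · have hit : i ∈ t := (List.mem_cons.mp hi).resolve_left hij
      obtain ⟨s₁, hs₁⟩ := comm_pow k c a q i j (α j)
      obtain ⟨s₂, hs₂⟩ := ih hndt i hit α
      refine ⟨s₁ * s₂, ?_⟩
      have hj' : (Function.update α i (α i + 1)) j = α j := Function.update_of_ne (Ne.symm hij) _ _
      rw [hj', ← mul_assoc, hs₁, smul_mul_assoc, mul_assoc, hs₂, mul_smul_comm, smul_smul]

def Mf (b : Fin c → Fin a) : QCI k c (unifQ k c q) (fun _ => a) :=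
  MM k c a q (fun i => (b i : ℕ))

lemma MM_zero_of_big (α : Fin c → ℕ) (i : Fin c) (hi : a ≤ α i) : MM k c a q α = 0 := by
  apply List.prod_eq_zero
  rw [List.mem_map]
  refine ⟨i, List.mem_finRange i, ?_⟩
  have h : xg k c a q i ^ α i = xg k c a q i ^ a * xg k c a q i ^ (α i - a) := by
    rw [← pow_add]
    congr 1
    omega
  rw [h, xg_pow, zero_mul]

lemma MM_mem (α : Fin c → ℕ) :
    MM k c a q α ∈ Submodule.span k (Set.range (Mf k c a q)) := by
  by_cases h : ∀ i, α i < a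
  · exact Submodule.subset_span ⟨fun i => ⟨α i, h i⟩, rfl⟩
  · push_neg at h
    obtain ⟨i, hi⟩ := h
    rw [MM_zero_of_big k c a q α i hi]
    exact zero_mem _

lemma mul_xg_mem (i : Fin c) (z : QCI k c (unifQ k c q) (fun _ => a))
    (hz : z ∈ Submodule.span k (Set.range (Mf k c a q))) :
    xg k c a q i * z ∈ Submodule.span k (Set.range (Mf k c a q)) := by
  induction hz using Submodule.span_induction with
  | mem w hw =>
    obtain ⟨b, rfl⟩ := hw
    obtain ⟨s, hs⟩ := keyW k c a q (List.finRange c) (List.nodup_finRange c) i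
      (List.mem_finRange i) (fun m => (b m : ℕ))
    show xg k c a q i * MM k c a q (fun m => (b m : ℕ)) ∈ _
    rw [show xg k c a q i * MM k c a q (fun m => (b m : ℕ)) =
      s • MM k c a q (Function.update (fun m => (b m : ℕ)) i ((b i : ℕ) + 1)) from hs]
    exact Submodule.smul_mem _ s (MM_mem k c a q _)
  | zero => rw [mul_zero]; exact zero_mem _
  | add x y hx hy ihx ihy => rw [mul_add]; exact add_mem ihx ihy
  | smul r x hx ihx => rw [mul_smul_comm]; exact Submodule.smul_mem _ r ihx

lemma mul_left_mem (y z : QCI k c (unifQ k c q) (fun _ => a))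
    (hz : z ∈ Submodule.span k (Set.range (Mf k c a q))) :
    y * z ∈ Submodule.span k (Set.range (Mf k c a q)) := by
  obtain ⟨w, rfl⟩ := RingQuot.mkAlgHom_surjective k (qciRel k c (unifQ k c q) (fun _ => a)) y
  induction w using FreeAlgebra.induction generalizing z with
  | grade0 r =>
    rw [AlgHom.commutes, Algebra.algebraMap_eq_smul_one, smul_mul_assoc, one_mul]
    exact Submodule.smul_mem _ r hz
  | grade1 i => exact mul_xg_mem k c a q i z hz
  | mul u v ihu ihv =>
    rw [map_mul, mul_assoc]
    exact ihu _ (ihv _ hz)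
  | add u v ihu ihv =>
    rw [map_add, add_mul]
    exact add_mem (ihu _ hz) (ihv _ hz)

lemma MM_zero_one : MM k c a q 0 = 1 := by
  apply List.prod_eq_one
  intro x hx
  rw [List.mem_map] at hx
  obtain ⟨j, _, rfl⟩ := hx
  exact pow_zero _

lemma span_Mf_top (z : QCI k c (unifQ k c q) (fun _ => a)) :
    z ∈ Submodule.span k (Set.range (Mf k c a q)) := by
  have h := mul_left_mem k c a q z (MM k c a q 0) (MM_mem k c a q 0)
  rwa [MM_zero_one, mul_one] at h

end QciSym
namespace QciSym
variable (k : Type) [Field k] (c a : ℕ) (q : k)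

lemma qpow_eq (hq1 : (q⁻¹ : k) ^ (a - 1) = 1) {m n u v : ℕ}
    (h : m + (a - 1) * u = n + (a - 1) * v) : (q⁻¹ : k) ^ m = (q⁻¹ : k) ^ n := by
  have h2 : (q⁻¹ : k) ^ m * ((q⁻¹) ^ (a - 1)) ^ u = (q⁻¹ : k) ^ n * ((q⁻¹) ^ (a - 1)) ^ v := by
    rw [← pow_mul, ← pow_mul, ← pow_add, ← pow_add, h]
  rwa [hq1, one_pow, one_pow, mul_one, mul_one] at h2

lemma exp_symm {α β : Fin c → ℕ} (h : ∀ i, α i + β i = a - 1) :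
    (∑ i, α i * sB i β) + (a - 1) * (∑ i, sB i α) =
      (∑ i, β i * sB i α) +
        (a - 1) * (∑ i : Fin c, (Finset.univ.filter (fun j => j < i)).card * α i) := by
  have key : ∀ i : Fin c, α i * sB i β + (a - 1) * sB i α =
      β i * sB i α + (a - 1) * ((Finset.univ.filter (fun j => j < i)).card * α i) := by
    intro i
    unfold sB
    rw [Finset.mul_sum, Finset.mul_sum, Finset.mul_sum, ← Finset.sum_add_distrib]
    have hcard : (a - 1) * ((Finset.univ.filter (fun j => j < i)).card * α i) =
        ∑ _j ∈ Finset.univ.filter (fun j => j < i), (a - 1) * α i := by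
      rw [Finset.sum_const, smul_eq_mul]
      ring
    rw [hcard, ← Finset.sum_add_distrib]
    refine Finset.sum_congr rfl fun j _ => ?_
    conv_lhs => rw [← h i]
    conv_rhs => rw [← h j]
    ring
  calc (∑ i, α i * sB i β) + (a - 1) * (∑ i, sB i α)
      = ∑ i, (α i * sB i β + (a - 1) * sB i α) := by
        rw [Finset.sum_add_distrib, Finset.mul_sum]
    _ = ∑ i, (β i * sB i α + (a - 1) * ((Finset.univ.filter (fun j => j < i)).card * α i)) :=
        Finset.sum_congr rfl fun i _ => key i
    _ = _ := by rw [Finset.sum_add_distrib, Finset.mul_sum]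

end QciSym

theorem uniform_qci_is_symmetric
    (k : Type) [Field k] (c a : ℕ) (hc : 2 ≤ c) (ha : 2 ≤ a)
    (q : k) (hq : q ^ (a - 1) = 1) :
    IsSymmAlg k (QCI k c (unifQ k c q) (fun _ => a)) := by
  classical
  have ha1 : 1 ≤ a := by omega
  have hq0 : q ≠ 0 := by
    intro h
    rw [h, zero_pow (by omega : a - 1 ≠ 0)] at hq
    exact zero_ne_one hq
  have hqi1 : (q⁻¹ : k) ^ (a - 1) = 1 := by
    rw [inv_pow, hq, inv_one]
  have hqiz : (q⁻¹ : k) ≠ 0 := inv_ne_zero hq0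
  set φ := QciSym.phi k c a q hq0 ha1 with hφ
  -- the value of φ on products of basis monomials
  have hMfgood : ∀ b : Fin c → Fin a, ∀ i, ((b i : ℕ)) < a := fun b i => (b i).isLt
  have hval : ∀ b b' : Fin c → Fin a,
      φ (QciSym.Mf k c a q b * QciSym.Mf k c a q b') =
        if (fun i => (b i : ℕ) + (b' i : ℕ)) = (fun _ => a - 1) then
          (q⁻¹) ^ (∑ i, (b i : ℕ) * QciSym.sB i (fun j => (b' j : ℕ))) else 0 := by
    intro b b'
    exact QciSym.phi_MM_mul k c a q hq0 ha1 _ _ (hMfgood b) (hMfgood b')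
  refine ⟨φ, ?_, ?_, ?_⟩
  · -- symmetry
    have hMf : ∀ b b' : Fin c → Fin a,
        φ (QciSym.Mf k c a q b * QciSym.Mf k c a q b') =
          φ (QciSym.Mf k c a q b' * QciSym.Mf k c a q b) := by
      intro b b'
      rw [hval b b', hval b' b]
      by_cases hcond : (fun i => (b i : ℕ) + (b' i : ℕ)) = (fun _ => a - 1)
      · have hcond' : (fun i => (b' i : ℕ) + (b i : ℕ)) = (fun _ : Fin c => a - 1) := by
          funext i
          rw [Nat.add_comm]
          exact congrFun hcond i
        rw [if_pos hcond, if_pos hcond']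
        exact QciSym.qpow_eq k a q hqi1
          (QciSym.exp_symm c a (fun i => congrFun hcond i))
      · have hcond' : ¬ ((fun i => (b' i : ℕ) + (b i : ℕ)) = (fun _ : Fin c => a - 1)) := by
          intro h
          apply hcond
          funext i
          rw [Nat.add_comm]
          exact congrFun h i
        rw [if_neg hcond, if_neg hcond']
    intro z w
    have hz := QciSym.span_Mf_top k c a q z
    have hw := QciSym.span_Mf_top k c a q w
    induction hz using Submodule.span_induction with
    | mem u hu =>
      induction hw using Submodule.span_induction with
      | mem v hv =>
        obtain ⟨b, rfl⟩ := hu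
        obtain ⟨b', rfl⟩ := hv
        exact hMf b b'
      | zero => rw [mul_zero, zero_mul]
      | add x y hx hy ihx ihy => rw [mul_add, add_mul, map_add, map_add, ihx, ihy]
      | smul r x hx ihx => rw [mul_smul_comm, smul_mul_assoc, map_smul, map_smul, ihx]
    | zero => rw [mul_zero, zero_mul]
    | add x y hx hy ihx ihy => rw [mul_add, add_mul, map_add, map_add, ihx, ihy]
    | smul r x hx ihx => rw [mul_smul_comm, smul_mul_assoc, map_smul, map_smul, ihx]
  · -- left nondegeneracy
    intro z hzy
    obtain ⟨co, hco⟩ := (Submodule.mem_span_range_iff_exists_fun k).mp (QciSym.span_Mf_top k c a q z)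
    have hco0 : ∀ b0 : Fin c → Fin a, co b0 = 0 := by
      intro b0
      set b' : Fin c → Fin a := fun i => ⟨a - 1 - (b0 i : ℕ), by omega⟩ with hb'
      have htest := hzy (QciSym.Mf k c a q b')
      rw [← hco, Finset.sum_mul, map_sum] at htest
      have hterm : ∀ b : Fin c → Fin a,
          φ ((co b • QciSym.Mf k c a q b) * QciSym.Mf k c a q b') =
            if b = b0 then co b * (q⁻¹) ^ (∑ i, (b i : ℕ) * QciSym.sB i (fun j => (b' j : ℕ)))
            else 0 := by
        intro b
        rw [smul_mul_assoc, map_smul, smul_eq_mul, hval b b']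
        by_cases hb : b = b0
        · subst hb
          rw [if_pos rfl, if_pos ?_]
          funext i
          have h1 : (b i : ℕ) < a := (b i).isLt
          simp [hb']
          omega
        · rw [if_neg hb, if_neg ?_, mul_zero]
          intro h
          apply hb
          funext i
          have h1 := congrFun h i
          simp [hb'] at h1
          have h2 : (b i : ℕ) < a := (b i).isLt
          have h3 : (b0 i : ℕ) < a := (b0 i).isLt
          have : (b i : ℕ) = (b0 i : ℕ) := by omega
          exact Fin.ext this
      rw [Finset.sum_congr rfl (fun b _ => hterm b)] at htest
      rw [Finset.sum_ite_eq' Finset.univ b0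
        (fun b => co b * (q⁻¹) ^ (∑ i, (b i : ℕ) * QciSym.sB i (fun j => (b' j : ℕ))))] at htest
      rw [if_pos (Finset.mem_univ b0)] at htest
      exact (mul_eq_zero.mp htest).resolve_right (pow_ne_zero _ hqiz)
    rw [← hco]
    exact Finset.sum_eq_zero fun b _ => by rw [hco0 b, zero_smul]
  · -- right nondegeneracy
    intro z hzy
    obtain ⟨co, hco⟩ := (Submodule.mem_span_range_iff_exists_fun k).mp (QciSym.span_Mf_top k c a q z)
    have hco0 : ∀ b0 : Fin c → Fin a, co b0 = 0 := by
      intro b0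
      set b' : Fin c → Fin a := fun i => ⟨a - 1 - (b0 i : ℕ), by omega⟩ with hb'
      have htest := hzy (QciSym.Mf k c a q b')
      rw [← hco, Finset.mul_sum, map_sum] at htest
      have hterm : ∀ b : Fin c → Fin a,
          φ (QciSym.Mf k c a q b' * (co b • QciSym.Mf k c a q b)) =
            if b = b0 then co b * (q⁻¹) ^ (∑ i, (b' i : ℕ) * QciSym.sB i (fun j => (b j : ℕ)))
            else 0 := by
        intro b
        rw [mul_smul_comm, map_smul, smul_eq_mul, hval b' b]
        by_cases hb : b = b0
        · subst hb
          rw [if_pos rfl, if_pos ?_]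
          funext i
          have h1 : (b i : ℕ) < a := (b i).isLt
          simp [hb']
          omega
        · rw [if_neg hb, if_neg ?_, mul_zero]
          intro h
          apply hb
          funext i
          have h1 := congrFun h i
          simp [hb'] at h1
          have h2 : (b i : ℕ) < a := (b i).isLt
          have h3 : (b0 i : ℕ) < a := (b0 i).isLt
          have : (b i : ℕ) = (b0 i : ℕ) := by omega
          exact Fin.ext this
      rw [Finset.sum_congr rfl (fun b _ => hterm b)] at htest
      rw [Finset.sum_ite_eq' Finset.univ b0
        (fun b => co b * (q⁻¹) ^ (∑ i, (b' i : ℕ) * QciSym.sB i (fun j => (b j : ℕ)))),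
        if_pos (Finset.mem_univ b0)] at htest
      exact (mul_eq_zero.mp htest).resolve_right (pow_ne_zero _ hqiz)
    rw [← hco]
    exact Finset.sum_eq_zero fun b _ => by rw [hco0 b, zero_smul]
end
end
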